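/- arXiv:2207.11800 — 3 statements merged into one kernel-verified Lean document; each statement's English description precedes it below -/
import Mathlib

section
/- Let k be a field of characteristic p > 0, fix positive integers n and d, let I_d be the set of n-tuples of nonnegative integers summing to d, and let K = k[a_i : i ∈ I_d] be a polynomial ring with one variable for each tuple in I_d. Let f = Σ_{i ∈ I_d} a_i · x_1^{i_1}···x_n^{i_n} be the generic degree d polynomial in K[x_1,...,x_n]. If N is a positive integer with N < p, then for every n-tuple j = (j_1,...,j_n) of nonnegative integers with j_1 + ··· + j_n = N·d, the coefficient of the monomial x_1^{j_1}···x_n^{j_n} in f^N is a nonzero element of K. -/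
open MvPolynomial

/-- The generic homogeneous polynomial of degree `d` in `n` variables: over the polynomial
ring `K = k[a_i : i ∈ I_d]` (with one variable `a_i` for each exponent vector `i` of degree
`d`, realized as variables indexed by `Fin n →₀ ℕ`), it is `Σ_{i ∈ I_d} a_i · x^i`. -/
noncomputable def genericPoly (k : Type*) [Field k] (n d : ℕ) :
    MvPolynomial (Fin n) (MvPolynomial (Fin n →₀ ℕ) k) :=
  ∑ v ∈ Finset.finsuppAntidiag (Finset.univ : Finset (Fin n)) d,
    monomial v (X v : MvPolynomial (Fin n →₀ ℕ) k)

/-- Auxiliary: a product of monomials is a monomial. -/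
lemma prod_monomial_aux {σ R ι : Type*} [CommSemiring R] (s : Finset ι)
    (a : ι → (σ →₀ ℕ)) (c : ι → R) :
    ∏ i ∈ s, (monomial (a i) (c i) : MvPolynomial σ R)
      = monomial (∑ i ∈ s, a i) (∏ i ∈ s, c i) := by
  classical
  induction s using Finset.induction_on with
  | empty => simp
  | insert _ _ h ih =>
    rw [Finset.prod_insert h, Finset.sum_insert h, Finset.prod_insert h, ih, monomial_mul]

/-- Auxiliary: there is a subvector of prescribed degree. -/
lemma exists_le_deg {n : ℕ} : ∀ (c : ℕ) (j : Fin n →₀ ℕ), c ≤ ∑ t, j t →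
    ∃ v : Fin n →₀ ℕ, (∀ t, v t ≤ j t) ∧ ∑ t, v t = c := by
  intro c
  induction c with
  | zero => intro j _; exact ⟨0, fun t => Nat.zero_le _, by simp⟩
  | succ c ih =>
    intro j hc
    obtain ⟨v, hvle, hvc⟩ := ih j (Nat.le_of_succ_le hc)
    have : ∃ t, v t < j t := by
      by_contra h
      push_neg at h
      have : ∀ t, v t = j t := fun t => le_antisymm (hvle t) (h t)
      have : ∑ t, v t = ∑ t, j t := Finset.sum_congr rfl fun t _ => this t
      omega
    obtain ⟨t, ht⟩ := this
    refine ⟨v + Finsupp.single t 1, fun s => ?_, ?_⟩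
    · rw [Finsupp.add_apply, Finsupp.single_apply]
      by_cases hts : t = s
      · subst hts; simpa using ht
      · simp [hts, hvle s]
    · simp only [Finsupp.add_apply, Finset.sum_add_distrib, hvc, Finsupp.single_apply]
      rw [Finset.sum_ite_eq (Finset.univ : Finset (Fin n)) t (fun _ => 1)]
      simp

/-- Auxiliary: a vector of degree `N*d` decomposes into degree-`d` vectors. -/
lemma exists_decomp {n : ℕ} (d : ℕ) : ∀ (N : ℕ) (j : Fin n →₀ ℕ), (∑ t, j t) = N * d →
    ∃ κ : (Fin n →₀ ℕ) →₀ ℕ, (κ.sum fun _ m => m) = N ∧ (κ.sum fun v m => m • v) = j ∧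
      ∀ v ∈ κ.support, (∑ t, v t) = d := by
  intro N
  induction N with
  | zero =>
    intro j hj
    have : j = 0 := by
      ext t
      have := Finset.sum_eq_zero_iff.mp (by simpa only [zero_mul] using hj) t (Finset.mem_univ t)
      simpa using this
    exact ⟨0, by simp, by simp [this], by simp⟩
  | succ N ih =>
    intro j hj
    have hd : d ≤ ∑ t, j t := by rw [hj]; nlinarith
    obtain ⟨v, hvle, hvd⟩ := exists_le_deg d j hd
    set j' : Fin n →₀ ℕ := j - v with hj'def
    have hj'app : ∀ t, j' t = j t - v t := fun t => Finsupp.tsub_apply j v t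
    have hj'sum : ∑ t, j' t = N * d := by
      have : ∑ t, j' t = ∑ t, (j t - v t) := Finset.sum_congr rfl fun t _ => hj'app t
      rw [this, Finset.sum_tsub_distrib Finset.univ (fun t _ => hvle t), hj, hvd,
        Nat.succ_mul, Nat.add_sub_cancel]
    obtain ⟨κ', h1, h2, h3⟩ := ih j' hj'sum
    refine ⟨κ' + Finsupp.single v 1, ?_, ?_, ?_⟩
    · rw [Finsupp.sum_add_index' (fun _ => rfl) (fun _ _ _ => rfl), h1,
        Finsupp.sum_single_index rfl]
    · rw [Finsupp.sum_add_index' (by simp) (fun w m₁ m₂ => add_smul m₁ m₂ w), h2,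
        Finsupp.sum_single_index (by simp)]
      ext t
      simp only [Finsupp.add_apply, one_smul, hj'app t]
      have := hvle t
      omega
    · intro w hw
      rcases Finset.mem_union.mp (Finsupp.support_add hw) with h | h
      · exact h3 w h
      · have : w = v := by
          have := Finsupp.support_single_subset h
          simpa using this
        rw [this]; exact hvd

set_option maxHeartbeats 1000000 in
/-- If `0 < N < p`, then for every exponent vector `j` of total degree `N·d`, the
coefficient of `x^j` in the `N`-th power of the generic degree-`d` polynomial in `n`
variables is nonzero. -/
theorem coeff_pow_genericPoly_ne_zero {k : Type*} [Field k] {p : ℕ} (hp : p.Prime)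
    [CharP k p] {n d : ℕ} (hn : 0 < n) (hd : 0 < d) (N : ℕ) (hN : 0 < N) (hNp : N < p)
    (j : Fin n →₀ ℕ) (hj : ∑ t, j t = N * d) :
    MvPolynomial.coeff j ((genericPoly k n d) ^ N) ≠ 0 := by
  classical
  set A : Finset (Fin n →₀ ℕ) := Finset.finsuppAntidiag (Finset.univ : Finset (Fin n)) d with hA
  -- membership in A
  have hmemA : ∀ v : Fin n →₀ ℕ, (∑ t, v t) = d → v ∈ A := by
    intro v hv
    rw [hA, Finset.mem_finsuppAntidiag]
    exact ⟨hv, Finset.subset_univ _⟩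
  -- get a decomposition
  obtain ⟨κ₀, hκ₀N, hκ₀j, hκ₀d⟩ := exists_decomp d N j hj
  have hκ₀supp : κ₀.support ⊆ A := fun v hv => hmemA v (hκ₀d v hv)
  have hκ₀mem : ⇑κ₀ ∈ Finset.piAntidiag A N := by
    rw [Finset.mem_piAntidiag]
    constructor
    · rw [← hκ₀N, Finsupp.sum_of_support_subset κ₀ hκ₀supp _ (fun _ _ => rfl)]
    · intro v hv
      exact hκ₀supp (Finsupp.mem_support_iff.mpr hv)
  have hwκ₀ : ∑ v ∈ A, κ₀ v • v = j := by
    rw [← hκ₀j, Finsupp.sum_of_support_subset κ₀ hκ₀supp _ (by simp)]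
  -- expand the power
  have hpow : (genericPoly k n d) ^ N =
      ∑ κ ∈ Finset.piAntidiag A N,
        monomial (∑ v ∈ A, κ v • v)
          ((Nat.multinomial A κ : MvPolynomial (Fin n →₀ ℕ) k) * ∏ v ∈ A, X v ^ κ v) := by
    rw [genericPoly, Finset.sum_pow_eq_sum_piAntidiag]
    refine Finset.sum_congr rfl fun κ hκ => ?_
    have : ∏ v ∈ A, (monomial v (X v : MvPolynomial (Fin n →₀ ℕ) k)) ^ κ v
        = monomial (∑ v ∈ A, κ v • v) (∏ v ∈ A, (X v : MvPolynomial (Fin n →₀ ℕ) k) ^ κ v) := by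
      rw [← prod_monomial_aux]
      exact Finset.prod_congr rfl fun v _ => monomial_pow
    rw [this, ← map_natCast (C : MvPolynomial (Fin n →₀ ℕ) k →+*
      MvPolynomial (Fin n) (MvPolynomial (Fin n →₀ ℕ) k)), C_mul_monomial]
  -- the coefficient
  have hcoeff : MvPolynomial.coeff j ((genericPoly k n d) ^ N) =
      ∑ κ ∈ Finset.piAntidiag A N,
        if (∑ v ∈ A, κ v • v) = j then
          (Nat.multinomial A κ : MvPolynomial (Fin n →₀ ℕ) k) * ∏ v ∈ A, X v ^ κ v
        else 0 := by
    rw [hpow, MvPolynomial.coeff_sum]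
    exact Finset.sum_congr rfl fun κ _ => coeff_monomial _ _ _
  -- the product of X's is a monomial
  have hprodX : ∀ κ ∈ Finset.piAntidiag A N,
      ∃ (F : (Fin n →₀ ℕ) →₀ ℕ), ⇑F = κ ∧
        (∏ v ∈ A, (X v : MvPolynomial (Fin n →₀ ℕ) k) ^ κ v) = monomial F 1 := by
    intro κ hκ
    rw [Finset.mem_piAntidiag] at hκ
    refine ⟨Finsupp.onFinset A κ hκ.2, rfl, ?_⟩
    rw [← prod_X_pow_eq_monomial]
    refine (Finset.prod_subset Finsupp.support_onFinset_subset ?_).symm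
    intro v _ hv
    rw [Finsupp.notMem_support_iff] at hv
    have hv' : κ v = 0 := hv
    simp [hv']
  -- extract coefficient at κ₀
  intro hzero
  have hside : ∀ κ ∈ Finset.piAntidiag A N, κ ≠ ⇑κ₀ →
      MvPolynomial.coeff κ₀ (if (∑ v ∈ A, κ v • v) = j then
        (Nat.multinomial A κ : MvPolynomial (Fin n →₀ ℕ) k) * ∏ v ∈ A, X v ^ κ v
      else 0) = 0 := by
    intro κ hκ hne
    by_cases hw : (∑ v ∈ A, κ v • v) = j
    · rw [if_pos hw]
      obtain ⟨F, hF, hFX⟩ := hprodX κ hκ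
      rw [hFX, ← map_natCast (C : k →+* MvPolynomial (Fin n →₀ ℕ) k),
        C_mul_monomial, mul_one, coeff_monomial, if_neg]
      intro hFeq
      exact hne (by rw [← hF, hFeq])
    · rw [if_neg hw, MvPolynomial.coeff_zero]
  have := congrArg (MvPolynomial.coeff κ₀) hzero
  rw [hcoeff, MvPolynomial.coeff_sum,
    Finset.sum_eq_single_of_mem ⇑κ₀ hκ₀mem hside] at this
  obtain ⟨F, hF, hFX⟩ := hprodX ⇑κ₀ hκ₀mem
  have hFeq : F = κ₀ := Finsupp.ext fun v => by rw [hF]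
  rw [if_pos hwκ₀, hFX, hFeq, ← map_natCast (C : k →+* MvPolynomial (Fin n →₀ ℕ) k),
    C_mul_monomial, mul_one, coeff_monomial, if_pos rfl, MvPolynomial.coeff_zero] at this
  -- multinomial is nonzero mod p
  have hdvd : Nat.multinomial A ⇑κ₀ ∣ Nat.factorial N := by
    have hspec := Nat.multinomial_spec A ⇑κ₀
    rw [(Finset.mem_piAntidiag.mp hκ₀mem).1] at hspec
    exact Dvd.intro_left _ hspec
  have hpN : ¬ p ∣ Nat.factorial N := fun h =>
    absurd ((Nat.Prime.dvd_factorial hp).mp h) (by omega)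
  have hne0 : (Nat.multinomial A ⇑κ₀ : k) ≠ 0 := by
    rw [Ne, CharP.cast_eq_zero_iff k p]
    exact fun h => hpN (h.trans hdvd)
  exact hne0 this
end

section
/- Let k be an algebraically closed field of characteristic p > 0 and let d ≥ 4 be an integer. Write 2p = d·N + r with N a nonnegative integer and 3 ≤ r ≤ d − 1. Suppose i and j are nonnegative integers with i·N < p, j·N < p, and d − 2 ≤ i + j ≤ d − 1. Then for any homogeneous polynomial g ∈ k[x,y] of degree d − i − j that is divisible by neither x nor y, the polynomial f = x^i y^j g satisfies f^N ∉ (x^p, y^p). -/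
open MvPolynomial

section Aux

lemma quad_expand {k : Type*} [Field k] (G : Polynomial k) (hdeg : G.natDegree ≤ 2) :
    G = Polynomial.C (G.coeff 0) + Polynomial.C (G.coeff 1) * Polynomial.X
      + Polynomial.C (G.coeff 2) * Polynomial.X ^ 2 := by
  ext n
  rcases n with _ | _ | _ | n <;>
    simp [Polynomial.coeff_eq_zero_of_natDegree_lt, Polynomial.coeff_X_pow, Polynomial.coeff_one]
  exact Polynomial.coeff_eq_zero_of_natDegree_lt (by omega)

lemma quad_recur {k : Type*} [Field k] (G : Polynomial k) (hdeg : G.natDegree ≤ 2)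
    {N : ℕ} (hN : 1 ≤ N) (u : ℕ) :
    G.coeff 0 * ((u : k) + 2) * (G ^ N).coeff (u + 2)
      + G.coeff 1 * ((u : k) + 1) * (G ^ N).coeff (u + 1)
      + G.coeff 2 * (u : k) * (G ^ N).coeff u
    = (N : k) * (G.coeff 1 * (G ^ N).coeff (u + 1) + 2 * G.coeff 2 * (G ^ N).coeff u) := by
  have hG := quad_expand G hdeg
  have hd' : Polynomial.derivative G
      = Polynomial.C (G.coeff 1) + Polynomial.C (2 * G.coeff 2) * Polynomial.X := by
    conv_lhs => rw [hG]
    simp [Polynomial.derivative_X_pow]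
    linear_combination (-(Polynomial.C (G.coeff 2) * Polynomial.X)) * map_ofNat (Polynomial.C (R := k)) 2
  have key : G * Polynomial.derivative (G ^ N)
      = Polynomial.C (N : k) * (Polynomial.derivative G * G ^ N) := by
    rw [Polynomial.derivative_pow]
    have h1 : G * G ^ (N - 1) = G ^ N := by
      conv_rhs => rw [show N = N - 1 + 1 by omega]
      rw [pow_succ]; ring
    calc G * (Polynomial.C (N : k) * G ^ (N - 1) * Polynomial.derivative G)
        = Polynomial.C (N : k) * (Polynomial.derivative G * (G * G ^ (N - 1))) := by ring
      _ = _ := by rw [h1]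
  set H := G ^ N with hH
  have key2 : (Polynomial.C (G.coeff 0) + Polynomial.C (G.coeff 1) * Polynomial.X
        + Polynomial.C (G.coeff 2) * Polynomial.X ^ 2) * Polynomial.derivative H
      = Polynomial.C (N : k)
        * ((Polynomial.C (G.coeff 1) + Polynomial.C (2 * G.coeff 2) * Polynomial.X) * H) := by
    rw [← hG, ← hd']; exact key
  have hco := congrArg (fun q : Polynomial k => q.coeff (u + 1)) key2
  simp only [add_mul, Polynomial.coeff_add, mul_assoc, Polynomial.coeff_C_mul,
    Polynomial.coeff_X_mul, Polynomial.coeff_mul_C, Polynomial.coeff_derivative, mul_add] at hco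
  rcases u with _ | v
  · have hx2 : (Polynomial.X ^ 2 * Polynomial.derivative H).coeff 1 = 0 := by
      rw [mul_comm, Polynomial.coeff_mul_X_pow']
      norm_num
    rw [hx2] at hco
    push_cast at hco ⊢
    linear_combination hco
  · have hx2 : (Polynomial.X ^ 2 * Polynomial.derivative H).coeff (v + 1 + 1)
        = (Polynomial.derivative H).coeff v := by
      have := Polynomial.coeff_X_pow_mul (Polynomial.derivative H) 2 v
      simpa using this
    rw [hx2, Polynomial.coeff_derivative] at hco
    push_cast at hco ⊢
    linear_combination hco

lemma cast_nat_ne_zero {k : Type*} [Field k] {p : ℕ} [CharP k p]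
    {n : ℕ} (h0 : 0 < n) (hn : n < p) : (n : k) ≠ 0 := by
  rw [Ne, CharP.cast_eq_zero_iff k p]
  intro hdvd
  have := Nat.le_of_dvd h0 hdvd
  omega

lemma coeff_zero_pow_ne {k : Type*} [Field k] (G : Polynomial k) (N : ℕ)
    (hc0 : G.coeff 0 ≠ 0) : (G ^ N).coeff 0 ≠ 0 := by
  rw [Polynomial.coeff_zero_eq_eval_zero, Polynomial.eval_pow,
    ← Polynomial.coeff_zero_eq_eval_zero]
  exact pow_ne_zero _ hc0

lemma case_deg_two {k : Type*} [Field k] {p : ℕ} (hp : p.Prime) [CharP k p]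
    (G : Polynomial k) (hdeg : G.natDegree ≤ 2) {N : ℕ} (hN : 1 ≤ N) (hNp : 2 * N + 2 ≤ p)
    (hc0 : G.coeff 0 ≠ 0) (hc2 : G.coeff 2 ≠ 0) {s : ℕ} (hs : s + 1 ≤ 2 * N)
    (h1 : (G ^ N).coeff s = 0) (h2 : (G ^ N).coeff (s + 1) = 0) : False := by
  have main : ∀ v, (G ^ N).coeff (s - v) = 0 ∧ (G ^ N).coeff (s - v + 1) = 0 := by
    intro v
    induction v with
    | zero => exact ⟨h1, by simpa using h2⟩
    | succ v ih =>
      by_cases hsv : s ≤ v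
      · rw [show s - (v + 1) = s - v by omega]; exact ih
      · obtain ⟨ih1, ih2⟩ := ih
        set w := s - (v + 1) with hwdef
        have hw : s - v = w + 1 := by omega
        rw [hw] at ih1 ih2
        refine ⟨?_, by simpa [hw] using ih1⟩
        have hr := quad_recur G hdeg hN (N := N) w
        rw [ih1, ih2] at hr
        have hw2 : w < 2 * N := by omega
        have hcast : ((2 * N - w : ℕ) : k) ≠ 0 :=
          cast_nat_ne_zero (p := p) (by omega) (by omega)
        have hkey : G.coeff 2 * (G ^ N).coeff w * ((2 * N - w : ℕ) : k) = 0 := by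
          push_cast [Nat.cast_sub hw2.le]
          linear_combination -hr
        rcases mul_eq_zero.mp hkey with h | h
        · rcases mul_eq_zero.mp h with h' | h'
          · exact absurd h' hc2
          · exact h'
        · exact absurd h hcast
  obtain ⟨h0, -⟩ := main s
  rw [Nat.sub_self] at h0
  exact coeff_zero_pow_ne G N hc0 h0

lemma case_deg_one {k : Type*} [Field k] {p : ℕ} (hp : p.Prime) [CharP k p]
    (G : Polynomial k) (hdeg : G.natDegree ≤ 2) {N : ℕ} (hN : 1 ≤ N) (hNp : 2 * N + 2 ≤ p)
    (hc0 : G.coeff 0 ≠ 0) (hc1 : G.coeff 1 ≠ 0) (hc2 : G.coeff 2 = 0) {s : ℕ}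
    (hs : s ≤ N) (h1 : (G ^ N).coeff s = 0) : False := by
  have main : ∀ v, s + v ≤ N → (G ^ N).coeff (s + v) = 0 := by
    intro v
    induction v with
    | zero => simpa using fun _ => h1
    | succ v ih =>
      intro hle
      have ihv := ih (by omega)
      rcases Nat.eq_zero_or_pos (s + v) with hz | hpos
      · rw [hz] at ihv
        exact absurd ihv (coeff_zero_pow_ne G N hc0)
      · obtain ⟨w, hw⟩ : ∃ w, s + v = w + 1 := ⟨s + v - 1, by omega⟩
        have hr := quad_recur G hdeg hN (N := N) w
        rw [hc2, ← hw, ihv] at hr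
        have hcast : ((s + v + 1 : ℕ) : k) ≠ 0 :=
          cast_nat_ne_zero (p := p) (by omega) (by omega)
        have hkey : G.coeff 0 * (G ^ N).coeff (s + v + 1) * ((s + v + 1 : ℕ) : k) = 0 := by
          rw [show s + v + 1 = w + 2 by omega]
          push_cast
          linear_combination hr
        rcases mul_eq_zero.mp hkey with h | h
        · rcases mul_eq_zero.mp h with h' | h'
          · exact absurd h' hc0
          · exact h'
        · exact absurd h hcast
  have hN0 := main (N - s) (by omega)
  rw [show s + (N - s) = N by omega] at hN0
  have hdeg1 : G.natDegree ≤ 1 := by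
    rw [Polynomial.natDegree_le_iff_coeff_eq_zero]
    intro m hm
    rcases Nat.lt_or_ge m 3 with h3 | h3
    · interval_cases m
      · exact hc2
    · exact Polynomial.coeff_eq_zero_of_natDegree_lt (by omega)
  have hdeq : G.natDegree = 1 :=
    le_antisymm hdeg1 (Polynomial.le_natDegree_of_ne_zero hc1)
  have hlead : (G ^ N).coeff N = (G.coeff 1) ^ N := by
    have hnd : (G ^ N).natDegree = N := by
      rw [Polynomial.natDegree_pow, hdeq, mul_one]
    have hcn := Polynomial.coeff_natDegree (p := G ^ N)
    rw [hnd] at hcn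
    rw [hcn, Polynomial.leadingCoeff_pow, Polynomial.leadingCoeff, hdeq]
  rw [hN0] at hlead
  exact pow_ne_zero _ hc1 hlead.symm

noncomputable def psiMap (k : Type*) [Field k] : MvPolynomial (Fin 2) k →ₐ[k] Polynomial k :=
  MvPolynomial.aeval ![Polynomial.X, 1]

noncomputable def muF (a b : ℕ) : Fin 2 →₀ ℕ := Finsupp.single 0 a + Finsupp.single 1 b

@[simp] lemma muF_zero (a b : ℕ) : muF a b 0 = a := by
  simp [muF, Finsupp.single_apply]

@[simp] lemma muF_one (a b : ℕ) : muF a b 1 = b := by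
  simp [muF, Finsupp.single_apply]

lemma degree_fin2 (m : Fin 2 →₀ ℕ) : m.degree = m 0 + m 1 := by
  rw [Finsupp.degree, ← Fin.sum_univ_two (f := fun i => m i)]
  exact Finset.sum_subset (Finset.subset_univ _) (fun x _ hx => by
    simpa using Finsupp.notMem_support_iff.mp hx)

lemma muF_eq {m : Fin 2 →₀ ℕ} {a b : ℕ} (h0 : m 0 = a) (h1 : m 1 = b) : m = muF a b := by
  ext idx
  fin_cases idx <;> simp [h0, h1]

lemma coeff_psiMap {k : Type*} [Field k] {h : MvPolynomial (Fin 2) k} {D : ℕ}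
    (hh : h.IsHomogeneous D) (a : ℕ) :
    (psiMap k h).coeff a = coeff (muF a (D - a)) h := by
  rw [psiMap, MvPolynomial.aeval_def, MvPolynomial.eval₂_eq']
  rw [Polynomial.finset_sum_coeff]
  have hterm : ∀ m : Fin 2 →₀ ℕ,
      (algebraMap k (Polynomial k) (coeff m h) *
        ∏ i, (![Polynomial.X, (1 : Polynomial k)] i) ^ m i).coeff a
      = if m 0 = a then coeff m h else 0 := by
    intro m
    rw [Fin.prod_univ_two]
    simp [Polynomial.coeff_C_mul, Polynomial.coeff_X_pow, eq_comm,
      Matrix.cons_val_zero, Matrix.cons_val_one]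
  simp only [hterm]
  rw [Finset.sum_eq_single (muF a (D - a))]
  · simp
  · intro m hm hne
    rw [if_neg]
    intro h0
    have hdeg : m.degree = D := by
      rw [Finsupp.degree_eq_weight_one]
      exact hh (MvPolynomial.mem_support_iff.mp hm)
    rw [degree_fin2, h0] at hdeg
    exact hne (muF_eq h0 (by omega))
  · intro hns
    rw [if_pos (muF_zero _ _)]
    exact MvPolynomial.notMem_support_iff.mp hns

lemma mem_span_coeff {k : Type*} [Field k] {p : ℕ} {h : MvPolynomial (Fin 2) k}
    (hmem : h ∈ Ideal.span {(X 0 : MvPolynomial (Fin 2) k) ^ p,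
      (X 1 : MvPolynomial (Fin 2) k) ^ p})
    {a b : ℕ} (ha : a < p) (hb : b < p) : coeff (muF a b) h = 0 := by
  rw [Ideal.mem_span_pair] at hmem
  obtain ⟨u, v, rfl⟩ := hmem
  rw [MvPolynomial.coeff_add, MvPolynomial.X_pow_eq_monomial, MvPolynomial.X_pow_eq_monomial,
    MvPolynomial.coeff_mul_monomial', MvPolynomial.coeff_mul_monomial']
  rw [if_neg, if_neg, add_zero]
  · intro hle
    have := hle 1
    rw [Finsupp.single_apply, muF_one] at this
    simp at this
    omega
  · intro hle
    have := hle 0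
    rw [Finsupp.single_apply, muF_zero] at this
    simp at this
    omega

lemma X_dvd_of_support {k : Type*} [Field k] {g : MvPolynomial (Fin 2) k} (idx : Fin 2)
    (hall : ∀ m ∈ g.support, m idx ≠ 0) : X idx ∣ g := by
  conv_rhs => rw [g.as_sum]
  apply Finset.dvd_sum
  intro m hm
  rw [← pow_one (X idx : MvPolynomial (Fin 2) k), MvPolynomial.X_pow_eq_monomial,
    MvPolynomial.monomial_dvd_monomial]
  refine ⟨Or.inr ?_, one_dvd _⟩
  rw [Finsupp.single_le_iff]
  exact Nat.one_le_iff_ne_zero.mpr (hall m hm)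

end Aux

/-- Lemma: fix a prime `p` and `d ≥ 4`, and write `2p = d·N + r` with `N ≥ 0` and
`3 ≤ r ≤ d − 1`. Suppose `i, j ≥ 0` satisfy `i·N < p`, `j·N < p` and
`d − 2 ≤ i + j ≤ d − 1`. Then for any homogeneous `g ∈ k[x,y]` of degree `d − i − j`
divisible by neither `x` nor `y`, the polynomial `f = x^i y^j g` satisfies
`f^N ∉ (x^p, y^p)`. -/
theorem pow_not_mem_frobenius {k : Type*} [Field k] [IsAlgClosed k] {p : ℕ}
    (hp : p.Prime) [CharP k p] {d N r : ℕ} (hd : 4 ≤ d)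
    (h2p : 2 * p = d * N + r) (hr3 : 3 ≤ r) (hrd : r ≤ d - 1)
    {i j : ℕ} (hi : i * N < p) (hj : j * N < p)
    (hij1 : d - 2 ≤ i + j) (hij2 : i + j ≤ d - 1)
    (g : MvPolynomial (Fin 2) k) (hg : g.IsHomogeneous (d - i - j))
    (hgx : ¬ (X 0 : MvPolynomial (Fin 2) k) ∣ g)
    (hgy : ¬ (X 1 : MvPolynomial (Fin 2) k) ∣ g) :
    ((X 0 : MvPolynomial (Fin 2) k) ^ i * (X 1 : MvPolynomial (Fin 2) k) ^ j * g) ^ N ∉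
      Ideal.span {(X 0 : MvPolynomial (Fin 2) k) ^ p, (X 1 : MvPolynomial (Fin 2) k) ^ p} := by
  intro hmem
  set E := d - i - j with hEdef
  have hEor : E = 1 ∨ E = 2 := by omega
  have hdE : i + j + E = d := by omega
  have hprod : d * N = i * N + j * N + E * N := by rw [← hdE]; ring
  have h4N : 4 * N ≤ d * N := Nat.mul_le_mul_right N hd
  have hNp : 2 * N + 2 ≤ p := by omega
  have hp2 : 2 ≤ p := hp.two_le
  set G := psiMap k g with hGdef
  set F := ((X 0 : MvPolynomial (Fin 2) k) ^ i * (X 1 : MvPolynomial (Fin 2) k) ^ j * g) ^ N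
    with hFdef
  have hFhom : F.IsHomogeneous (d * N) := by
    have h1 := (((isHomogeneous_X k 0).pow i).mul ((isHomogeneous_X k 1).pow j)).mul hg
    have h2 := h1.pow N
    rwa [show (1 * i + 1 * j + E) * N = d * N by rw [one_mul, one_mul, hdE]] at h2
  have hGco : ∀ a, G.coeff a = coeff (muF a (E - a)) g := fun a => coeff_psiMap hg a
  have hc0 : G.coeff 0 ≠ 0 := by
    rw [hGco, Nat.sub_zero]
    intro h0
    apply hgx
    apply X_dvd_of_support 0
    intro m hm hm0
    have hdeg : m.degree = E := by
      rw [Finsupp.degree_eq_weight_one]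
      exact hg (MvPolynomial.mem_support_iff.mp hm)
    rw [degree_fin2, hm0] at hdeg
    rw [show m = muF 0 E from muF_eq hm0 (by omega)] at hm
    exact MvPolynomial.mem_support_iff.mp hm h0
  have hcE : G.coeff E ≠ 0 := by
    rw [hGco, Nat.sub_self]
    intro h0
    apply hgy
    apply X_dvd_of_support 1
    intro m hm hm1
    have hdeg : m.degree = E := by
      rw [Finsupp.degree_eq_weight_one]
      exact hg (MvPolynomial.mem_support_iff.mp hm)
    rw [degree_fin2, hm1] at hdeg
    rw [show m = muF E 0 from muF_eq (by omega) hm1] at hm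
    exact MvPolynomial.mem_support_iff.mp hm h0
  have hGdeg : G.natDegree ≤ 2 := by
    rw [Polynomial.natDegree_le_iff_coeff_eq_zero]
    intro m hm
    rw [hGco]
    apply hg.coeff_eq_zero
    rw [degree_fin2, muF_zero, muF_one]
    omega
  have hpsiF : psiMap k F = Polynomial.X ^ (i * N) * G ^ N := by
    rw [hFdef, map_pow, map_mul, map_mul, map_pow, map_pow]
    have hx0 : psiMap k (X 0) = Polynomial.X := by
      simp [psiMap]
    have hx1 : psiMap k (X 1) = 1 := by
      simp [psiMap]
    rw [hx0, hx1, one_pow, mul_one, mul_pow, ← pow_mul]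
  have hvan : ∀ s, i * N + s < p → d * N - (i * N + s) < p → (G ^ N).coeff s = 0 := by
    intro s h1 h2
    have h3 : coeff (muF (i * N + s) (d * N - (i * N + s))) F = 0 :=
      mem_span_coeff hmem h1 h2
    have h4 := coeff_psiMap hFhom (i * N + s)
    rw [h3, hpsiF] at h4
    rw [show i * N + s = s + i * N by ring, Polynomial.coeff_X_pow_mul] at h4
    exact h4
  rcases hEor with hE1 | hE2
  · -- E = 1, i + j = d - 1
    have hEN : E * N = N := by rw [hE1, one_mul]
    have hc2 : G.coeff 2 = 0 := by
      rw [hGco]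
      apply hg.coeff_eq_zero
      rw [degree_fin2, muF_zero, muF_one]
      omega
    rw [hE1] at hcE
    by_cases hs0 : j * N + N < p
    · exact coeff_zero_pow_ne G N hc0 (hvan 0 (by omega) (by omega))
    · have hN1 : 1 ≤ N := by omega
      set s := j * N + N + 1 - p with hsdef
      exact case_deg_one hp G hGdeg hN1 hNp hc0 hcE hc2 (s := s) (by omega)
        (hvan s (by omega) (by omega))
  · -- E = 2, i + j = d - 2
    have hEN : E * N = 2 * N := by rw [hE2]
    rw [hE2] at hcE
    by_cases hs0 : j * N + 2 * N < p
    · exact coeff_zero_pow_ne G N hc0 (hvan 0 (by omega) (by omega))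
    · have hN1 : 1 ≤ N := by omega
      by_cases hjN : j * N = p - 1
      · have h := hvan (2 * N) (by omega) (by omega)
        have hdeq : G.natDegree = 2 :=
          le_antisymm hGdeg (Polynomial.le_natDegree_of_ne_zero hcE)
        have hnd : (G ^ N).natDegree = 2 * N := by
          rw [Polynomial.natDegree_pow, hdeq]; ring
        have hcn := Polynomial.coeff_natDegree (p := G ^ N)
        rw [hnd] at hcn
        rw [hcn, Polynomial.leadingCoeff_pow, Polynomial.leadingCoeff, hdeq] at h
        exact pow_ne_zero _ hcE h
      · set s := j * N + 2 * N + 1 - p with hsdef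
        exact case_deg_two hp G hGdeg hN1 hNp hc0 hcE (s := s) (by omega)
          (hvan s (by omega) (by omega)) (hvan (s + 1) (by omega) (by omega))
end

section
/- Let k be an algebraically closed field of characteristic p > 0, let n ≥ 2, let e ≥ 1, and let d be an integer with p^e + 1 ≤ d ≤ 2p^e. Then there exists a squarefree homogeneous polynomial f of degree d in k[x_1,...,x_n] with fpt(f) = 1/p^e. -/
open MvPolynomial

/-- The Frobenius power `m^{[p^e]} = (x_1^{p^e}, ..., x_n^{p^e})` of the maximal ideal
`m = (x_1, ..., x_n)` in `k[x_1, ..., x_n]`. -/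
noncomputable def frobeniusPower (k : Type*) [Field k] (n : ℕ) (p e : ℕ) :
    Ideal (MvPolynomial (Fin n) k) :=
  Ideal.span (Set.range fun i : Fin n => (X i : MvPolynomial (Fin n) k) ^ p ^ e)

/-- The F-pure threshold of `f ∈ k[x_1, ..., x_n]`:
`fpt(f) = sup { N / p^e : f^N ∉ m^{[p^e]} }`. -/
noncomputable def fpt {k : Type*} [Field k] {n : ℕ} (p : ℕ)
    (f : MvPolynomial (Fin n) k) : ℝ :=
  sSup {r : ℝ | ∃ N e : ℕ, f ^ N ∉ frobeniusPower k n p e ∧ r = (N : ℝ) / (p : ℝ) ^ e}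

section Aux

variable {k : Type*} [Field k] {n : ℕ}

lemma Xpow_mem {p s m : ℕ} (i : Fin n) (h : p ^ s ≤ m) :
    (X i : MvPolynomial (Fin n) k) ^ m ∈ frobeniusPower k n p s := by
  have hm : (X i : MvPolynomial (Fin n) k) ^ m = X i ^ p ^ s * X i ^ (m - p ^ s) := by
    rw [← pow_add]; congr 1; omega
  rw [hm]
  exact Ideal.mul_mem_right _ _ (Ideal.subset_span ⟨i, rfl⟩)

lemma coeff_zero_of_mem {p s : ℕ} {g : MvPolynomial (Fin n) k}
    (hg : g ∈ frobeniusPower k n p s) (μ : Fin n →₀ ℕ) (hμ : ∀ i, μ i < p ^ s) :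
    coeff μ g = 0 := by
  rw [frobeniusPower, Ideal.mem_span_range_iff_exists_fun] at hg
  obtain ⟨c, hc⟩ := hg
  rw [← hc, coeff_sum]
  refine Finset.sum_eq_zero fun i _ => ?_
  rw [X_pow_eq_monomial, coeff_mul_monomial']
  rw [if_neg]
  intro hle
  exact absurd (hμ i) (not_lt.mpr ((Finsupp.single_le_iff).mp hle))

lemma prime_X_fin {m : ℕ} (i : Fin (m + 1)) :
    Prime (X i : MvPolynomial (Fin (m + 1)) k) := by
  have h0 : Prime (X (0 : Fin (m + 1)) : MvPolynomial (Fin (m + 1)) k) := by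
    rw [← MulEquiv.prime_iff (finSuccEquiv k m).toMulEquiv]
    have h : (finSuccEquiv k m).toMulEquiv (X 0) = Polynomial.X := finSuccEquiv_X_zero
    rw [h]
    exact Polynomial.prime_X
  have hiff := MulEquiv.prime_iff (renameEquiv k (Equiv.swap (0 : Fin (m+1)) i)).toMulEquiv
    (p := (X (0 : Fin (m+1)) : MvPolynomial (Fin (m+1)) k))
  rw [← hiff] at h0
  have hx : (renameEquiv k (Equiv.swap (0 : Fin (m+1)) i)).toMulEquiv (X 0) = X i := by
    simp [renameEquiv_apply, rename_X]
  rwa [hx] at h0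

lemma choose_pred_pow_ne_zero {p : ℕ} (hp : p.Prime) (t j : ℕ) (hj : j ≤ p ^ t - 1) :
    ¬ p ∣ (p ^ t - 1).choose j := by
  haveI := Fact.mk hp
  suffices h : ((p ^ t - 1).choose j : ZMod p) = (-1) ^ j by
    rw [← ZMod.natCast_eq_zero_iff, h]
    exact pow_ne_zero _ (by simp)
  induction j with
  | zero => simp
  | succ i ih =>
    have hi : i ≤ p ^ t - 1 := by omega
    have hpt : 1 ≤ p ^ t := Nat.one_le_pow _ _ hp.pos
    have hpas : (p ^ t - 1).choose i + (p ^ t - 1).choose (i+1) = (p ^ t).choose (i+1) := by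
      have h := Nat.choose_succ_succ (p ^ t - 1) i
      simp only [Nat.succ_eq_add_one] at h; rw [show p ^ t - 1 + 1 = p ^ t by omega] at h
      omega
    have hdvd : p ∣ (p ^ t).choose (i + 1) :=
      hp.dvd_choose_pow (by omega) (by omega)
    have h2 : ((p ^ t - 1).choose i : ZMod p) + ((p ^ t - 1).choose (i+1) : ZMod p) = 0 := by
      rw [← Nat.cast_add, hpas, ZMod.natCast_eq_zero_iff]
      exact hdvd
    rw [ih hi] at h2
    have h3 : ((p ^ t - 1).choose (i+1) : ZMod p) = -(-1 : ZMod p) ^ i := by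
      linear_combination h2
    rw [h3, pow_succ]
    ring

lemma coeff_C_mul_XX {i0 i1 : Fin n} (r : k) (e0 e1 : ℕ) (μ : Fin n →₀ ℕ) :
    coeff μ (C r * X i0 ^ e0 * X i1 ^ e1)
      = if Finsupp.single i0 e0 + Finsupp.single i1 e1 = μ then r else 0 := by
  rw [X_pow_eq_monomial, X_pow_eq_monomial, C_mul_monomial, monomial_mul, coeff_monomial]
  simp

end Aux

section Master

variable {k : Type*} [Field k]

lemma fpt_master {p : ℕ} (hp : p.Prime) [CharP k p] {m e d a : ℕ}
    (he : 1 ≤ e) (ha : a ≤ 1) (hd1 : p ^ e + 1 ≤ d) (hd2 : d ≤ 2 * p ^ e)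
    (hda : a = 0 → d + 1 ≤ 2 * p ^ e) :
    fpt p (X (0 : Fin (m+2)) ^ d - X 0 ^ a * X 1 ^ (d - a) : MvPolynomial (Fin (m+2)) k)
      = 1 / (p : ℝ) ^ e := by
  haveI := Fact.mk hp
  have hp2 : 2 ≤ p := hp.two_le
  set q := p ^ e with hq
  have hpq : p ≤ q := Nat.le_self_pow (by omega) p
  have hq2 : 2 ≤ q := le_trans hp2 hpq
  set c := d - a with hcdef
  have hca : c + a = d := by omega
  have hcq : q ≤ c := by omega
  set f : MvPolynomial (Fin (m+2)) k := X 0 ^ d - X 0 ^ a * X 1 ^ c with hf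
  have h01 : (0 : Fin (m+2)) ≠ 1 := by
    simp [Fin.ext_iff]
  -- Frobenius powers of f
  have key2 : ∀ t : ℕ, f ^ p ^ t
      = X 0 ^ (d * p ^ t) - X 0 ^ (a * p ^ t) * X 1 ^ (c * p ^ t) := by
    intro t
    rw [hf, sub_pow_char_pow, mul_pow, ← pow_mul, ← pow_mul, ← pow_mul]
  -- f lies in small Frobenius powers
  have key1 : ∀ s, s ≤ e → f ∈ frobeniusPower k (m+2) p s := by
    intro s hs
    have hpse : p ^ s ≤ q := Nat.pow_le_pow_right (by omega) hs
    refine Ideal.sub_mem _ (Xpow_mem _ (by omega)) ?_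
    exact Ideal.mul_mem_left _ _ (Xpow_mem _ (by omega))
  -- upper bound: membership of large powers
  have key3 : ∀ N s : ℕ, p ^ s + 1 ≤ N * q → f ^ N ∈ frobeniusPower k (m+2) p s := by
    intro N s hNs
    have hps1 : 1 ≤ p ^ s := Nat.one_le_pow _ _ (by omega)
    have hN1 : 1 ≤ N := by
      rcases Nat.eq_zero_or_pos N with h | h
      · subst h; simp at hNs
      · exact h
    by_cases hse : s ≤ e
    · have hfN : f ^ N = f ^ (N - 1) * f := by rw [← pow_succ]; congr 1; omega
      rw [hfN]
      exact Ideal.mul_mem_left _ _ (key1 s hse)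
    · push_neg at hse
      set t := s - e with ht
      have hts : t + e = s := by omega
      have hps : p ^ s = p ^ t * q := by rw [hq, ← pow_add, hts]
      have hptN : p ^ t < N := by
        by_contra hle
        push_neg at hle
        have h := Nat.mul_le_mul_right q hle
        linarith
      have hfN : f ^ N = f ^ p ^ t * f ^ (N - p ^ t) := by
        rw [← pow_add]; congr 1; omega
      rw [hfN, key2 t]
      have hdq : q * p ^ t ≤ d * p ^ t := Nat.mul_le_mul_right _ (by omega)
      have hcq' : q * p ^ t ≤ c * p ^ t := Nat.mul_le_mul_right _ hcq
      refine Ideal.mul_mem_right _ _ (Ideal.sub_mem _ (Xpow_mem _ ?_)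
        (Ideal.mul_mem_left _ _ (Xpow_mem _ ?_)))
      · have hx : p ^ s = q * p ^ t := by rw [hps, Nat.mul_comm]
        linarith
      · have hx : p ^ s = q * p ^ t := by rw [hps, Nat.mul_comm]
        linarith
  -- coefficient computation
  have key4 : ∀ M j0 : ℕ, j0 ≤ M →
      coeff (Finsupp.single (0 : Fin (m+2)) (d * j0 + a * (M - j0))
        + Finsupp.single 1 (c * (M - j0))) (f ^ M)
      = (-1 : k) ^ (j0 + M) * (M.choose j0 : k) := by
    intro M j0 hj0
    have hc0 : 0 < c := by omega
    have hmono : ∀ j1 j2 : ℕ, j1 ≤ M → j2 ≤ M → j1 < j2 →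
        d * j1 + a * (M - j1) < d * j2 + a * (M - j2) := by
      intro j1 j2 hm1 hm2 hlt
      have hA1 : a * (M - j1) + a * j1 = a * M := by rw [← Nat.mul_add]; congr 1; omega
      have hA2 : a * (M - j2) + a * j2 = a * M := by rw [← Nat.mul_add]; congr 1; omega
      have hB1 : d * j1 = c * j1 + a * j1 := by rw [← hca]; ring
      have hB2 : d * j2 = c * j2 + a * j2 := by rw [← hca]; ring
      have hC : c * j1 < c * j2 := by exact (Nat.mul_lt_mul_left hc0).mpr hlt
      linarith
    set μ := Finsupp.single (0 : Fin (m+2)) (d * j0 + a * (M - j0))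
        + Finsupp.single (1 : Fin (m+2)) (c * (M - j0)) with hμ
    rw [hf, sub_pow, coeff_sum]
    have hterm : ∀ j : ℕ,
        ((-1 : MvPolynomial (Fin (m+2)) k) ^ (j + M) * (X 0 ^ d) ^ j
          * (X 0 ^ a * X 1 ^ c) ^ (M - j) * (M.choose j : MvPolynomial (Fin (m+2)) k))
        = C ((-1 : k) ^ (j + M) * (M.choose j : k))
            * X 0 ^ (d * j + a * (M - j)) * X 1 ^ (c * (M - j)) := by
      intro j
      have h1 : ((M.choose j : ℕ) : MvPolynomial (Fin (m+2)) k) = C ((M.choose j : ℕ) : k) :=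
        (map_natCast (C : k →+* MvPolynomial (Fin (m+2)) k) _).symm
      rw [h1, map_mul, map_pow, map_neg, map_one]
      rw [show (X (0 : Fin (m+2)) ^ d : MvPolynomial (Fin (m+2)) k) ^ j = X 0 ^ (d * j) by
        rw [← pow_mul]]
      rw [show ((X (0 : Fin (m+2)) ^ a * X 1 ^ c : MvPolynomial (Fin (m+2)) k)) ^ (M - j)
          = X 0 ^ (a * (M - j)) * X 1 ^ (c * (M - j)) by
        rw [mul_pow, ← pow_mul, ← pow_mul]]
      rw [pow_add]
      ring
    calc (∑ j ∈ Finset.range (M + 1),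
          coeff μ ((-1) ^ (j + M) * (X 0 ^ d) ^ j * (X 0 ^ a * X 1 ^ c) ^ (M - j)
            * (M.choose j : MvPolynomial (Fin (m+2)) k)))
        = ∑ j ∈ Finset.range (M + 1),
            (if Finsupp.single (0 : Fin (m+2)) (d * j + a * (M - j))
              + Finsupp.single 1 (c * (M - j)) = μ
             then (-1 : k) ^ (j + M) * (M.choose j : k) else 0) := by
          refine Finset.sum_congr rfl fun j _ => ?_
          rw [hterm j, coeff_C_mul_XX]
      _ = (-1 : k) ^ (j0 + M) * (M.choose j0 : k) := by
          refine (Finset.sum_eq_single_of_mem j0 (Finset.mem_range.mpr (by omega))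
            ?_).trans (if_pos rfl)
          intro j hjr hjne
          rw [if_neg]
          intro heq
          apply hjne
          have h0 := DFunLike.congr_fun heq (0 : Fin (m+2))
          simp only [hμ, Finsupp.add_apply, Finsupp.single_eq_same,
            Finsupp.single_eq_of_ne h01, add_zero] at h0
          -- h0 : d * j + a * (M - j) = d * j0 + a * (M - j0)
          have hjM : j ≤ M := by
            have := Finset.mem_range.mp hjr; omega
          rcases lt_trichotomy j j0 with hlt | heq' | hgt
          · exact absurd h0 (Nat.ne_of_lt (hmono j j0 hjM hj0 hlt))
          · exact heq'
          · exact absurd h0 (Nat.ne_of_gt (hmono j0 j hj0 hjM hgt))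
  -- lower bound: non-membership
  have key5 : ∀ t : ℕ, 1 ≤ t → f ^ (p ^ t - 1) ∉ frobeniusPower k (m+2) p (t + e) := by
    intro t ht hmem
    set M := p ^ t - 1 with hM
    set V := p ^ (t + e) with hV
    have hpt2 : 2 ≤ p ^ t := by
      calc 2 ≤ p := hp2
      _ = p ^ 1 := (pow_one p).symm
      _ ≤ p ^ t := Nat.pow_le_pow_right (by omega) ht
    have hM1 : 1 ≤ M := by omega
    have hVq : V = q * (M + 1) := by
      rw [hV, hq, pow_add, Nat.mul_comm]
      congr 1
      omega
    have hV1 : V - 1 + 1 = V := by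
      have : 1 ≤ p ^ (t + e) := Nat.one_le_pow _ _ (by omega)
      omega
    have hMV : M + 1 ≤ V := by
      have h := Nat.mul_le_mul_right (M + 1) (show 1 ≤ q by omega)
      rw [Nat.one_mul] at h
      linarith [hVq]
    have hc0 : 0 < c := by omega
    set m' := min M ((V - 1) / c) with hm'
    set j0 := M - m' with hj0def
    have hm'M : m' ≤ M := min_le_left _ _
    have hj0M : j0 ≤ M := by rw [hj0def]; exact Nat.sub_le _ _
    have hj0m : j0 + m' = M := by rw [hj0def]; exact Nat.sub_add_cancel hm'M
    have hMj0 : M - j0 = m' := by rw [hj0def]; exact Nat.sub_sub_self hm'M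
    have hE1 : c * m' ≤ V - 1 := by
      calc c * m' ≤ c * ((V - 1) / c) := Nat.mul_le_mul_left _ (min_le_right _ _)
        _ = (V - 1) / c * c := Nat.mul_comm _ _
        _ ≤ V - 1 := Nat.div_mul_le_self _ _
    have haM : a * M ≤ M := by
      calc a * M ≤ 1 * M := Nat.mul_le_mul_right _ ha
      _ = M := Nat.one_mul _
    have hBIG : c * (M + 1) + a * M + 1 ≤ 2 * V := by
      have h2V : 2 * V = 2 * q * (M + 1) := by rw [hVq]; ring
      rcases Nat.le_one_iff_eq_zero_or_eq_one.mp ha with ha0 | ha1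
      · have hd2' : d + 1 ≤ 2 * q := hda ha0
        have hc_d : c = d := by omega
        have hmm : (d + 1) * (M + 1) ≤ 2 * q * (M + 1) := Nat.mul_le_mul_right _ hd2'
        have hexp : (d + 1) * (M + 1) = d * (M + 1) + (M + 1) := by ring
        have hcm : c * (M + 1) = d * (M + 1) := by rw [hc_d]
        linarith
      · have hcd : c + 1 = d := by omega
        have h1 : d * (M + 1) ≤ 2 * q * (M + 1) := Nat.mul_le_mul_right _ hd2
        have hexp : d * (M + 1) = c * (M + 1) + (M + 1) := by
          rw [← hcd]; ring
        have haM' : a * M = M := by rw [ha1, Nat.one_mul]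
        linarith
    have hE0 : d * j0 + a * (M - j0) ≤ V - 1 := by
      have hMj : M - j0 = m' := by omega
      rw [hMj]
      by_cases hcs : M ≤ (V - 1) / c
      · have hmm : m' = M := by rw [hm']; exact min_eq_left hcs
        have hj00 : j0 = 0 := by omega
        rw [hj00, hmm]
        simp only [Nat.mul_zero, Nat.zero_add]
        exact le_trans haM (by omega)
      · push_neg at hcs
        have hm'eq : m' = (V - 1) / c := by rw [hm']; exact min_eq_right (le_of_lt hcs)
        have hmod : c * m' + (V - 1) % c = V - 1 := by
          rw [hm'eq]; exact Nat.div_add_mod _ _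
        have hrc : (V - 1) % c < c := Nat.mod_lt _ hc0
        have hsum : c * j0 + c * m' = c * M := by
          rw [← Nat.mul_add, hj0m]
        have hdj : d * j0 = c * j0 + a * j0 := by
          rw [← hca]; ring
        have haj : a * j0 + a * m' = a * M := by
          rw [← Nat.mul_add, hj0m]
        have hcM1 : c * (M + 1) = c * M + c := by ring
        linarith
    -- the coefficient is nonzero
    have hco := key4 M j0 hj0M
    have hall : ∀ i : Fin (m+2),
        ((Finsupp.single (0 : Fin (m+2)) (d * j0 + a * (M - j0))
          + Finsupp.single (1 : Fin (m+2)) (c * (M - j0)) : Fin (m+2) →₀ ℕ)) i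
            < p ^ (t + e) := by
      intro i
      have h1V : 1 ≤ V := by omega
      rw [Finsupp.add_apply, Finsupp.single_apply, Finsupp.single_apply]
      split_ifs with hA hB hB
      · exact absurd (hA.trans hB.symm) h01
      · rw [add_zero]
        show d * j0 + a * (M - j0) < V
        linarith
      · rw [zero_add]
        show c * (M - j0) < V
        rw [hMj0]
        linarith
      · simpa using (by omega : 0 < V)
    have h0 := coeff_zero_of_mem hmem _ hall
    rw [hco] at h0
    have hch : ¬ p ∣ M.choose j0 := choose_pred_pow_ne_zero hp t j0 (by omega)
    have hchk : (M.choose j0 : k) ≠ 0 := by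
      rw [Ne, CharP.cast_eq_zero_iff k p]
      exact hch
    exact (mul_ne_zero (pow_ne_zero _ (neg_ne_zero.mpr one_ne_zero)) hchk) h0
  -- assemble the sSup computation
  set S : Set ℝ :=
    {r : ℝ | ∃ N s : ℕ, f ^ N ∉ frobeniusPower k (m+2) p s ∧ r = (N : ℝ) / (p : ℝ) ^ s}
    with hS
  have hpR : (1 : ℝ) < (p : ℝ) := by exact_mod_cast hp.one_lt
  have hub : ∀ r ∈ S, r ≤ 1 / (p : ℝ) ^ e := by
    rintro r ⟨N, s, hnm, rfl⟩
    have hNq : N * q ≤ p ^ s := by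
      by_contra hcon
      push_neg at hcon
      exact hnm (key3 N s (by omega))
    rw [div_le_div_iff₀ (by positivity) (by positivity), one_mul]
    calc (N : ℝ) * (p : ℝ) ^ e = ((N * q : ℕ) : ℝ) := by push_cast [hq]; ring
      _ ≤ ((p ^ s : ℕ) : ℝ) := by exact_mod_cast hNq
      _ = (p : ℝ) ^ s := by push_cast; ring
  have hmemS : ∀ t : ℕ, 1 ≤ t → (((p ^ t - 1 : ℕ) : ℝ) / (p : ℝ) ^ (t + e)) ∈ S :=
    fun t ht => ⟨p ^ t - 1, t + e, key5 t ht, rfl⟩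
  have hne : S.Nonempty := ⟨_, hmemS 1 le_rfl⟩
  have hbdd : BddAbove S := ⟨1 / (p : ℝ) ^ e, hub⟩
  have hfpt : fpt p f = sSup S := rfl
  rw [hfpt]
  refine le_antisymm (csSup_le hne hub) ?_
  by_contra hlt
  push_neg at hlt
  set ε := 1 / (p : ℝ) ^ e - sSup S with hε
  have hε0 : 0 < ε := sub_pos.mpr hlt
  obtain ⟨t0, ht0⟩ := pow_unbounded_of_one_lt (1 / ε) hpR
  set t := t0 + 1 with htdef
  clear_value t
  have ht1 : 1 ≤ t := by omega
  have hle := le_csSup hbdd (hmemS t ht1)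
  have hptR : (0 : ℝ) < (p : ℝ) ^ t := by positivity
  have hpeR : (0 : ℝ) < (p : ℝ) ^ e := by positivity
  have hcast : ((p ^ t - 1 : ℕ) : ℝ) = (p : ℝ) ^ t - 1 := by
    have h1t : 1 ≤ p ^ t := Nat.one_le_pow _ _ (by omega)
    rw [Nat.cast_sub h1t, Nat.cast_pow, Nat.cast_one]
  have heq : ((p ^ t - 1 : ℕ) : ℝ) / (p : ℝ) ^ (t + e)
      = 1 / (p : ℝ) ^ e - 1 / (p : ℝ) ^ (t + e) := by
    rw [hcast]
    have hpe : (p : ℝ) ^ (t + e) = (p : ℝ) ^ t * (p : ℝ) ^ e := by rw [pow_add]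
    rw [hpe]
    field_simp
  have hsmall : 1 / (p : ℝ) ^ (t + e) < ε := by
    have h1 : 1 / ε < (p : ℝ) ^ t := ht0.trans_le (by
      rw [htdef]
      exact pow_le_pow_right₀ (le_of_lt hpR) (by omega))
    have h2 : (p : ℝ) ^ t ≤ (p : ℝ) ^ (t + e) := pow_le_pow_right₀ (le_of_lt hpR) (by omega)
    have h3 : 1 / ε < (p : ℝ) ^ (t + e) := lt_of_lt_of_le h1 h2
    have h4 : 1 < (p : ℝ) ^ (t + e) * ε := by rwa [div_lt_iff₀ hε0] at h3
    rw [div_lt_iff₀ (by positivity), mul_comm]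
    exact h4
  rw [heq] at hle
  have : 1 / (p : ℝ) ^ e - ε < 1 / (p : ℝ) ^ e - 1 / (p : ℝ) ^ (t + e) := by linarith
  simp only [hε] at this
  linarith

end Master

/-- Corollary (sharpness of the lower bound): for `n ≥ 2`, `e ≥ 1` and
`p^e + 1 ≤ d ≤ 2p^e`, there exists a squarefree homogeneous polynomial `f` of degree `d`
in `n` variables with `fpt(f) = 1/p^e`. -/
theorem exists_reduced_fpt_eq_one_div_pe {k : Type*} [Field k] [IsAlgClosed k] {p : ℕ}
    (hp : p.Prime) [CharP k p] {n : ℕ} (hn : 2 ≤ n) {e : ℕ} (he : 1 ≤ e)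
    {d : ℕ} (hd1 : p ^ e + 1 ≤ d) (hd2 : d ≤ 2 * p ^ e) :
    ∃ f : MvPolynomial (Fin n) k, Squarefree f ∧ f.IsHomogeneous d ∧
      fpt p f = 1 / (p : ℝ) ^ e := by
  obtain ⟨m, rfl⟩ : ∃ m, n = m + 2 := ⟨n - 2, by omega⟩
  have hp2 := hp.two_le
  have hpq : p ≤ p ^ e := Nat.le_self_pow (by omega) p
  have hd3 : 3 ≤ d := by omega
  have h01 : (0 : Fin (m+2)) ≠ 1 := by simp [Fin.ext_iff]
  by_cases hdvd : p ∣ d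
  · -- case a = 1
    refine ⟨X 0 ^ d - X 0 ^ 1 * X 1 ^ (d - 1), ?_, ?_, ?_⟩
    · -- squarefree
      intro g hg
      have hgf : g ∣ (X (0 : Fin (m+2)) ^ d - X 0 ^ 1 * X 1 ^ (d - 1) : MvPolynomial (Fin (m+2)) k) :=
        (dvd_mul_left g g).trans hg
      have hd0 : ((d : ℕ) : MvPolynomial (Fin (m+2)) k) = 0 := by
        rw [show ((d : ℕ) : MvPolynomial (Fin (m+2)) k) = C ((d : ℕ) : k) from
          (map_natCast (C : k →+* MvPolynomial (Fin (m+2)) k) d).symm,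
          (CharP.cast_eq_zero_iff k p d).mpr hdvd, map_zero]
      have hpd : pderiv (0 : Fin (m+2))
          (X (0 : Fin (m+2)) ^ d - X 0 ^ 1 * X 1 ^ (d - 1) : MvPolynomial (Fin (m+2)) k)
          = - X 1 ^ (d - 1) := by
        rw [map_sub, pderiv_pow, pderiv_X_self, pderiv_mul, pderiv_pow, pderiv_X_self,
          pderiv_pow, pderiv_X_of_ne (Ne.symm h01), hd0]
        ring
      have hder : g ∣ pderiv (0 : Fin (m+2))
          (X (0 : Fin (m+2)) ^ d - X 0 ^ 1 * X 1 ^ (d - 1) : MvPolynomial (Fin (m+2)) k) := by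
        obtain ⟨h, hh⟩ := hg
        rw [hh]
        exact ⟨pderiv 0 g * h + pderiv 0 g * h + g * pderiv 0 h, by
          rw [pderiv_mul, pderiv_mul]; ring⟩
      rw [hpd, dvd_neg] at hder
      rcases (dvd_prime_pow (prime_X_fin 1) _).mp hder with ⟨i, hi, hass⟩
      rcases Nat.eq_zero_or_pos i with hi0 | hipos
      · rw [hi0, pow_zero] at hass
        exact associated_one_iff_isUnit.mp hass
      · exfalso
        have hX1g : X (1 : Fin (m+2)) ∣ g :=
          (dvd_pow_self (X (1 : Fin (m+2))) hipos.ne').trans hass.symm.dvd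
        obtain ⟨h, hh⟩ := hX1g.trans hgf
        have h3 := congrArg (aeval
          (fun j : Fin (m+2) => if j = 1 then 0 else X j : Fin (m+2) → MvPolynomial (Fin (m+2)) k)) hh
        simp only [map_sub, map_mul, map_pow, aeval_X, if_true] at h3
        rw [if_neg h01] at h3
        rw [zero_pow (by omega : d - 1 ≠ 0), mul_zero, sub_zero, zero_mul] at h3
        exact pow_ne_zero d (X_ne_zero _) h3
    · -- homogeneous
      have h : (1 : ℕ) + (d - 1) = d := by omega
      have h2 := (isHomogeneous_X_pow (R := k) (0 : Fin (m+2)) 1).mul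
        (isHomogeneous_X_pow (1 : Fin (m+2)) (d - 1))
      rw [h] at h2
      exact (isHomogeneous_X_pow _ _).sub h2
    · exact fpt_master hp he (le_refl 1) hd1 hd2 (by omega)
  · -- case a = 0
    have hd2q : d + 1 ≤ 2 * p ^ e := by
      have hpd2 : p ∣ 2 * p ^ e := Dvd.dvd.mul_left (dvd_pow_self p (by omega)) 2
      rcases Nat.lt_or_ge d (2 * p ^ e) with h | h
      · omega
      · exfalso; exact hdvd (by rwa [show d = 2 * p ^ e by omega])
    have hfeq : (X (0 : Fin (m+2)) ^ d - X 0 ^ 0 * X 1 ^ (d - 0) : MvPolynomial (Fin (m+2)) k)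
        = X 0 ^ d - X 1 ^ d := by norm_num
    refine ⟨X 0 ^ d - X 0 ^ 0 * X 1 ^ (d - 0), ?_, ?_, ?_⟩
    · -- squarefree
      rw [hfeq]
      intro g hg
      have hgf : g ∣ (X (0 : Fin (m+2)) ^ d - X 1 ^ d : MvPolynomial (Fin (m+2)) k) :=
        (dvd_mul_left g g).trans hg
      have hdk : ((d : ℕ) : k) ≠ 0 := by
        rw [Ne, CharP.cast_eq_zero_iff k p]
        exact hdvd
      have hpd : pderiv (0 : Fin (m+2))
          (X (0 : Fin (m+2)) ^ d - X 1 ^ d : MvPolynomial (Fin (m+2)) k)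
          = C ((d : ℕ) : k) * X 0 ^ (d - 1) := by
        rw [map_sub, pderiv_pow, pderiv_X_self, pderiv_pow, pderiv_X_of_ne (Ne.symm h01)]
        rw [show ((d : ℕ) : MvPolynomial (Fin (m+2)) k) = C ((d : ℕ) : k) from
          (map_natCast (C : k →+* MvPolynomial (Fin (m+2)) k) d).symm]
        ring
      have hder : g ∣ pderiv (0 : Fin (m+2))
          (X (0 : Fin (m+2)) ^ d - X 1 ^ d : MvPolynomial (Fin (m+2)) k) := by
        obtain ⟨h, hh⟩ := hg
        rw [hh]
        exact ⟨pderiv 0 g * h + pderiv 0 g * h + g * pderiv 0 h, by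
          rw [pderiv_mul, pderiv_mul]; ring⟩
      rw [hpd] at hder
      have hu : IsUnit (C ((d : ℕ) : k) : MvPolynomial (Fin (m+2)) k) :=
        (isUnit_iff_ne_zero.mpr hdk).map (C : k →+* MvPolynomial (Fin (m+2)) k)
      rw [hu.dvd_mul_left] at hder
      rcases (dvd_prime_pow (prime_X_fin 0) _).mp hder with ⟨i, hi, hass⟩
      rcases Nat.eq_zero_or_pos i with hi0 | hipos
      · rw [hi0, pow_zero] at hass
        exact associated_one_iff_isUnit.mp hass
      · exfalso
        have hX0g : X (0 : Fin (m+2)) ∣ g :=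
          (dvd_pow_self (X (0 : Fin (m+2))) hipos.ne').trans hass.symm.dvd
        obtain ⟨h, hh⟩ := hX0g.trans hgf
        have h3 := congrArg (aeval
          (fun j : Fin (m+2) => if j = 0 then 0 else X j : Fin (m+2) → MvPolynomial (Fin (m+2)) k)) hh
        simp only [map_sub, map_pow, map_mul, aeval_X, if_true,
          zero_pow (by omega : d ≠ 0), zero_sub, zero_mul, neg_eq_zero] at h3
        exact pow_ne_zero d (X_ne_zero _) h3
    · rw [hfeq]
      exact (isHomogeneous_X_pow _ _).sub (isHomogeneous_X_pow _ _)
    · exact fpt_master hp he (Nat.zero_le 1) hd1 hd2 (fun _ => hd2q)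
end
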